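/- arXiv:math/0404414 — 3 statements merged into one kernel-verified Lean document; each statement's English description precedes it below -/
import Mathlib

section
/- Let $X$ be a Banach space, $a>0$, $\delta>0$, and $r:(a,\infty)\to X$ continuous with $\|r(\lambda)\|\le M/\lambda^{\delta}$ for all $\lambda>a$. If $\alpha,\beta>0$ satisfy $\alpha+\beta<\delta$, then the iterated fractional integrals satisfy the semigroup law $(r_\alpha)_\beta = r_{\alpha+\beta}$, where $r_\alpha(\lambda)=\int_\lambda^\infty \frac{(u-\lambda)^{\alpha-1}}{\Gamma(\alpha)} r(u)\,du$. -/
open MeasureTheory Set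

lemma beta_real {α β : ℝ} (hα : 0 < α) (hβ : 0 < β) :
    ∫ t in (0:ℝ)..1, t ^ (β - 1) * (1 - t) ^ (α - 1)
      = Real.Gamma α * Real.Gamma β / Real.Gamma (α + β) := by
  have h := Complex.Gamma_mul_Gamma_eq_betaIntegral (s := (β:ℂ)) (t := (α:ℂ))
    (by simpa using hβ) (by simpa using hα)
  rw [Complex.betaIntegral] at h
  have hint : (∫ x in (0:ℝ)..1, (x:ℂ) ^ ((β:ℂ) - 1) * (1 - (x:ℂ)) ^ ((α:ℂ) - 1))
      = ((∫ t in (0:ℝ)..1, t ^ (β - 1) * (1 - t) ^ (α - 1) : ℝ) : ℂ) := by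
    rw [← intervalIntegral.integral_ofReal]
    refine intervalIntegral.integral_congr fun x hx => ?_
    rw [uIcc_of_le zero_le_one] at hx
    rw [Complex.ofReal_mul, Complex.ofReal_cpow hx.1, Complex.ofReal_cpow (by linarith [hx.2] : (0:ℝ) ≤ 1 - x)]
    push_cast
    ring
  rw [hint, ← Complex.ofReal_add, Complex.Gamma_ofReal, Complex.Gamma_ofReal,
    Complex.Gamma_ofReal, ← Complex.ofReal_mul, ← Complex.ofReal_mul] at h
  have h2 := Complex.ofReal_injective h
  have hG : Real.Gamma (β + α) ≠ 0 := (Real.Gamma_pos_of_pos (by linarith)).ne'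
  rw [add_comm α β]
  field_simp
  linarith [h2]

lemma kernel_intInt {α β l v : ℝ} (hα : 0 < α) (hβ : 0 < β) (hlv : l < v) :
    IntervalIntegrable (fun u => (u - l) ^ (β - 1) * (v - u) ^ (α - 1)) volume l v := by
  have hm : l < (l + v) / 2 := by linarith
  have hm' : (l + v) / 2 < v := by linarith
  have h1 : IntervalIntegrable (fun u : ℝ => (u - l) ^ (β - 1)) volume l ((l + v) / 2) := by
    simpa using (intervalIntegral.intervalIntegrable_rpow' (by linarith : (-1:ℝ) < β - 1)
      (a := 0) (b := (l + v)/2 - l)).comp_sub_right l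
  have h2 : IntervalIntegrable (fun u : ℝ => (v - u) ^ (α - 1)) volume ((l + v) / 2) v := by
    simpa using (intervalIntegral.intervalIntegrable_rpow' (by linarith : (-1:ℝ) < α - 1)
      (a := v - (l+v)/2) (b := 0)).comp_sub_left v
  have c1 : ContinuousOn (fun u : ℝ => (v - u) ^ (α - 1)) (uIcc l ((l + v) / 2)) := by
    apply ContinuousOn.rpow_const (by fun_prop)
    intro x hx
    rw [uIcc_of_le hm.le] at hx
    have hxv : x < v := lt_of_le_of_lt hx.2 hm'
    exact Or.inl (sub_ne_zero.mpr hxv.ne')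
  have c2 : ContinuousOn (fun u : ℝ => (u - l) ^ (β - 1)) (uIcc ((l + v) / 2) v) := by
    apply ContinuousOn.rpow_const (by fun_prop)
    intro x hx
    rw [uIcc_of_le hm'.le] at hx
    have hlx : l < x := lt_of_lt_of_le hm hx.1
    exact Or.inl (sub_ne_zero.mpr hlx.ne')
  exact (h1.mul_continuousOn c1).trans (h2.continuousOn_mul c2)

lemma kernel_eval {α β l v : ℝ} (hα : 0 < α) (hβ : 0 < β) (hlv : l < v) :
    ∫ u in Ioo l v, (u - l) ^ (β - 1) * (v - u) ^ (α - 1)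
      = (v - l) ^ (α + β - 1) * (Real.Gamma α * Real.Gamma β / Real.Gamma (α + β)) := by
  have hc : (0:ℝ) < v - l := by linarith
  have step1 : ∫ u in Ioo l v, (u - l) ^ (β - 1) * (v - u) ^ (α - 1)
      = ∫ u in l..v, (u - l) ^ (β - 1) * (v - u) ^ (α - 1) := by
    rw [intervalIntegral.integral_of_le hlv.le, MeasureTheory.integral_Ioc_eq_integral_Ioo]
  have step2 : (∫ u in l..v, (u - l) ^ (β - 1) * (v - u) ^ (α - 1))
      = ∫ t in (0:ℝ)..(v - l), t ^ (β - 1) * (v - l - t) ^ (α - 1) := by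
    have := intervalIntegral.integral_comp_add_right
      (a := (0:ℝ)) (b := v - l) (fun u => (u - l) ^ (β - 1) * (v - u) ^ (α - 1)) l
    simp only [zero_add, sub_add_cancel, add_sub_cancel_right] at this
    rw [← this]
    congr 1
    ext t
    ring_nf
  have step3 : (∫ t in (0:ℝ)..(v - l), t ^ (β - 1) * (v - l - t) ^ (α - 1))
      = (v - l) • ∫ t in (0:ℝ)..1, ((v - l) * t) ^ (β - 1) * (v - l - (v - l) * t) ^ (α - 1) := by
    rw [intervalIntegral.integral_comp_mul_left
      (fun t => t ^ (β - 1) * (v - l - t) ^ (α - 1)) hc.ne']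
    rw [mul_zero, mul_one, smul_smul, mul_inv_cancel₀ hc.ne', one_smul]
  have step4 : (∫ t in (0:ℝ)..1, ((v - l) * t) ^ (β - 1) * (v - l - (v - l) * t) ^ (α - 1))
      = (v - l) ^ (β - 1) * (v - l) ^ (α - 1)
        * ∫ t in (0:ℝ)..1, t ^ (β - 1) * (1 - t) ^ (α - 1) := by
    rw [← intervalIntegral.integral_const_mul]
    refine intervalIntegral.integral_congr fun t ht => ?_
    rw [uIcc_of_le zero_le_one] at ht
    have e1 : (v - l - (v - l) * t) = (v - l) * (1 - t) := by ring
    rw [e1, Real.mul_rpow hc.le ht.1, Real.mul_rpow hc.le (by linarith [ht.2])]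
    ring
  rw [step1, step2, step3, step4, beta_real hα hβ, smul_eq_mul]
  rw [show (v - l) * ((v - l) ^ (β - 1) * (v - l) ^ (α - 1) * _) =
    ((v - l) * ((v - l) ^ (β - 1) * (v - l) ^ (α - 1))) *
    (Real.Gamma α * Real.Gamma β / Real.Gamma (α + β)) from by ring]
  congr 1
  rw [show α + β - 1 = 1 + (β - 1) + (α - 1) by ring, Real.rpow_add hc, Real.rpow_add hc,
    Real.rpow_one]
  ring


lemma tail_integrable {X : Type*} [NormedAddCommGroup X] [NormedSpace ℝ X]
    {M a δ : ℝ} (ha : 0 < a) {r : ℝ → X} (hr : ContinuousOn r (Ioi a))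
    (hbound : ∀ l, a < l → ‖r l‖ ≤ M / l ^ δ)
    {γ : ℝ} (hγ : 0 < γ) (hγδ : γ < δ) {u : ℝ} (hu : a < u) :
    IntegrableOn (fun v => ((v - u) ^ (γ - 1)) • r v) (Ioi u) := by
  have hu0 : 0 < u := ha.trans hu
  have hcont : ContinuousOn (fun v => ((v - u) ^ (γ - 1)) • r v) (Ioi u) := by
    refine ContinuousOn.smul ?_ (hr.mono fun v hv => lt_trans hu hv)
    refine ContinuousOn.rpow_const (by fun_prop) fun x hx => ?_
    exact Or.inl (sub_ne_zero.mpr (mem_Ioi.mp hx).ne')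
  have hsplit : Ioc u (2 * u + 1) ∪ Ioi (2 * u + 1) = Ioi u :=
    Ioc_union_Ioi_eq_Ioi (by linarith)
  rw [← hsplit]
  refine IntegrableOn.union ?_ ?_
  · -- near part
    obtain ⟨C, hC⟩ := (isCompact_Icc (a := u) (b := 2 * u + 1)).exists_bound_of_continuousOn
      (hr.mono fun x hx => lt_of_lt_of_le hu hx.1)
    have hintC : IntegrableOn (fun v => C * (v - u) ^ (γ - 1)) (Ioc u (2 * u + 1)) := by
      have h0 : IntegrableOn (fun v : ℝ => (v - u) ^ (γ - 1)) (Ioc u (2 * u + 1)) := by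
        rw [← intervalIntegrable_iff_integrableOn_Ioc_of_le (by linarith)]
        simpa using (intervalIntegral.intervalIntegrable_rpow' (by linarith : (-1:ℝ) < γ - 1)
          (a := 0) (b := 2 * u + 1 - u)).comp_sub_right u
      exact h0.const_mul C
    refine Integrable.mono' hintC
      ((hcont.mono Ioc_subset_Ioi_self).aestronglyMeasurable measurableSet_Ioc) ?_
    refine (ae_restrict_iff' measurableSet_Ioc).mpr (.of_forall fun v hv => ?_)
    have hvu : (0:ℝ) < v - u := by linarith [hv.1]
    rw [norm_smul, Real.norm_eq_abs, abs_of_pos (Real.rpow_pos_of_pos hvu _), mul_comm C]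
    exact mul_le_mul_of_nonneg_left (hC v ⟨hv.1.le, hv.2⟩) (Real.rpow_pos_of_pos hvu _).le
  · -- far part
    have hpos : (0:ℝ) < 2 * u + 1 := by linarith
    have hintg : IntegrableOn (fun v : ℝ => ((2:ℝ) ^ (1 - γ) + 1) * M * v ^ (γ - 1 - δ))
        (Ioi (2 * u + 1)) :=
      (integrableOn_Ioi_rpow_of_lt (by linarith) hpos).const_mul _
    refine Integrable.mono' hintg
      ((hcont.mono fun x hx => lt_trans (by linarith) (mem_Ioi.mp hx)).aestronglyMeasurable
        measurableSet_Ioi) ?_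
    refine (ae_restrict_iff' measurableSet_Ioi).mpr (.of_forall fun v hv => ?_)
    rw [mem_Ioi] at hv
    have hv0 : (0:ℝ) < v := by linarith
    have hvu : (0:ℝ) < v - u := by linarith
    have key : (v - u) ^ (γ - 1) ≤ ((2:ℝ) ^ (1 - γ) + 1) * v ^ (γ - 1) := by
      rcases le_or_gt 1 γ with h1 | h1
      · have : (v - u) ^ (γ - 1) ≤ v ^ (γ - 1) :=
          Real.rpow_le_rpow hvu.le (by linarith) (by linarith)
        nlinarith [Real.rpow_pos_of_pos hv0 (γ - 1), Real.rpow_pos_of_pos (show (0:ℝ) < 2 by norm_num) (1 - γ)]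
      · have h2 : v / 2 ≤ v - u := by linarith
        have h3 : (v - u) ^ (γ - 1) ≤ (v / 2) ^ (γ - 1) :=
          Real.rpow_le_rpow_of_nonpos (by linarith) h2 (by linarith)
        have h4 : (v / 2) ^ (γ - 1) = (2:ℝ) ^ (1 - γ) * v ^ (γ - 1) := by
          rw [Real.div_rpow hv0.le (by norm_num), show (1:ℝ) - γ = -(γ-1) by ring,
            Real.rpow_neg (by norm_num)]
          field_simp
        nlinarith [Real.rpow_pos_of_pos hv0 (γ - 1)]
    have hrv : ‖r v‖ ≤ M / v ^ δ := hbound v (by linarith)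
    have hM0 : (0:ℝ) ≤ M / v ^ δ := le_trans (norm_nonneg _) hrv
    rw [norm_smul, Real.norm_eq_abs, abs_of_pos (Real.rpow_pos_of_pos hvu _)]
    calc (v - u) ^ (γ - 1) * ‖r v‖ ≤ (((2:ℝ) ^ (1 - γ) + 1) * v ^ (γ - 1)) * (M / v ^ δ) := by
          apply mul_le_mul key hrv (norm_nonneg _)
          positivity
      _ = ((2:ℝ) ^ (1 - γ) + 1) * M * v ^ (γ - 1 - δ) := by
          rw [show γ - 1 - δ = (γ - 1) + (-δ) by ring, Real.rpow_add hv0,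
            Real.rpow_neg hv0.le, div_eq_mul_inv]
          ring

theorem stmt1 {X : Type*} [NormedAddCommGroup X] [NormedSpace ℝ X] [CompleteSpace X]
    (M a α β δ : ℝ) (hM : 0 < M) (ha : 0 < a) (hδ : 0 < δ)
    (hα : 0 < α) (hβ : 0 < β) (hαβ : α + β < δ)
    (r : ℝ → X) (hr : ContinuousOn r (Ioi a))
    (hbound : ∀ l, a < l → ‖r l‖ ≤ M / l ^ δ) :
    ∀ l, a < l →
      (∫ u in Ioi l, ((u - l) ^ (β - 1) / Real.Gamma β) •
          ∫ v in Ioi u, ((v - u) ^ (α - 1) / Real.Gamma α) • r v)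
        = ∫ v in Ioi l, ((v - l) ^ (α + β - 1) / Real.Gamma (α + β)) • r v := by
  intro l hl
  have hl0 : 0 < l := ha.trans hl
  have hGα : 0 < Real.Gamma α := Real.Gamma_pos_of_pos hα
  have hGβ : 0 < Real.Gamma β := Real.Gamma_pos_of_pos hβ
  have hGαβ : 0 < Real.Gamma (α + β) := Real.Gamma_pos_of_pos (by linarith)
  set μ := volume.restrict (Ioi l) with hμ
  set c : ℝ → ℝ → ℝ := fun u v =>
    ((u - l) ^ (β - 1) / Real.Gamma β) * ((v - u) ^ (α - 1) / Real.Gamma α) with hc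
  set S : Set (ℝ × ℝ) := {p : ℝ × ℝ | l < p.1 ∧ p.1 < p.2} with hS
  have hSmeas : MeasurableSet S :=
    ((isOpen_lt continuous_const continuous_fst).inter
      (isOpen_lt continuous_fst continuous_snd)).measurableSet
  set f : ℝ → ℝ → X := fun u v => S.indicator (fun p => c p.1 p.2 • r p.2) (u, v) with hf
  -- fact A
  have factA : ∀ u, l < u → ∀ v, f u v = (Ioi u).indicator (fun v => c u v • r v) v := by
    intro u hu v
    rcases lt_or_ge u v with h | h
    · rw [hf]
      simp only [indicator_of_mem (show (u, v) ∈ S from ⟨hu, h⟩),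
        indicator_of_mem (mem_Ioi.mpr h)]
    · rw [hf]
      simp only [indicator_of_notMem (show (u, v) ∉ S from fun hp => absurd hp.2 (not_lt.mpr h)),
        indicator_of_notMem (by simpa using h : v ∉ Ioi u)]
  -- fact B
  have factB : ∀ v u, f u v = (Ioo l v).indicator (fun u => c u v • r v) u := by
    intro v u
    by_cases h : l < u ∧ u < v
    · rw [hf]
      simp only [indicator_of_mem (show (u, v) ∈ S from h),
        indicator_of_mem (mem_Ioo.mpr h)]
    · rw [hf]
      simp only [indicator_of_notMem (show (u, v) ∉ S from h),
        indicator_of_notMem (by simpa [mem_Ioo] using h : u ∉ Ioo l v)]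
  -- fact C
  have factC : ∀ v, l < v → ∫ u in Ioo l v, c u v
      = (v - l) ^ (α + β - 1) / Real.Gamma (α + β) := by
    intro v hv
    have e1 : ∀ u, c u v = ((u - l) ^ (β - 1) * (v - u) ^ (α - 1))
        * (Real.Gamma β * Real.Gamma α)⁻¹ := by
      intro u; rw [hc]; field_simp
    simp_rw [e1]
    rw [integral_mul_const, kernel_eval hα hβ hv]
    field_simp
  -- integrability of slices in u
  have factD : ∀ v, l < v → Integrable (fun u => f u v) μ := by
    intro v hv
    have e0 : (fun u => f u v) = (Ioo l v).indicator (fun u => c u v • r v) := by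
      funext u; exact factB v u
    rw [e0, hμ, integrable_indicator_iff measurableSet_Ioo]
    have hker : IntegrableOn (fun u => (u - l) ^ (β - 1) * (v - u) ^ (α - 1)) (Ioo l v) := by
      rw [← intervalIntegrable_iff_integrableOn_Ioo_of_le hv.le]
      exact kernel_intInt hα hβ hv
    have hkc : IntegrableOn (fun u => c u v) (Ioo l v) := by
      have h2 := hker.mul_const (Real.Gamma β * Real.Gamma α)⁻¹
      refine IntegrableOn.congr_fun h2 (fun u _ => ?_) measurableSet_Ioo
      rw [hc]; field_simp
    exact (hkc.smul_const (r v)).mono_measure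
      (Measure.restrict_mono subset_rfl Measure.restrict_le_self)
  -- AESM
  have hcontg : ContinuousOn (fun p : ℝ × ℝ => c p.1 p.2 • r p.2) S := by
    refine ContinuousOn.smul (ContinuousOn.mul ?_ ?_) ?_
    · refine ContinuousOn.div_const (ContinuousOn.rpow_const (by fun_prop) fun p hp => ?_) _
      exact Or.inl (sub_ne_zero.mpr hp.1.ne')
    · refine ContinuousOn.div_const (ContinuousOn.rpow_const (by fun_prop) fun p hp => ?_) _
      exact Or.inl (sub_ne_zero.mpr hp.2.ne')
    · exact hr.comp (by fun_prop) fun p hp => mem_Ioi.mpr (lt_trans (lt_trans hl hp.1) hp.2)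
  have hAESM : AEStronglyMeasurable (Function.uncurry f) (μ.prod μ) := by
    have e : Function.uncurry f = S.indicator (fun p => c p.1 p.2 • r p.2) := rfl
    rw [e, aestronglyMeasurable_indicator_iff hSmeas]
    exact hcontg.aestronglyMeasurable hSmeas
  -- fact F : value of norm integral
  have factF : ∀ v, l < v → (∫ u, ‖f u v‖ ∂μ)
      = ((v - l) ^ (α + β - 1) / Real.Gamma (α + β)) * ‖r v‖ := by
    intro v hv
    have e1 : (fun u => ‖f u v‖) = (Ioo l v).indicator (fun u => ‖c u v • r v‖) := by
      funext u
      rw [factB v u, ← norm_indicator_eq_indicator_norm]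
    rw [e1, hμ, setIntegral_indicator measurableSet_Ioo,
      inter_eq_self_of_subset_right Ioo_subset_Ioi_self]
    have e2 : ∀ u ∈ Ioo l v, ‖c u v • r v‖ = c u v * ‖r v‖ := by
      intro u hu
      rw [norm_smul, Real.norm_eq_abs, abs_of_nonneg]
      rw [hc]
      exact mul_nonneg (div_nonneg (Real.rpow_nonneg (by linarith [hu.1]) _) hGβ.le)
        (div_nonneg (Real.rpow_nonneg (by linarith [hu.2]) _) hGα.le)
    rw [setIntegral_congr_fun measurableSet_Ioo e2, integral_mul_const, factC v hv]
  -- integrability of the norm integral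
  have factG : Integrable (fun v => ∫ u, ‖f u v‖ ∂μ) μ := by
    have h1 := ((tail_integrable ha hr hbound (show (0:ℝ) < α + β by linarith) hαβ hl).norm.mul_const
      (1 / Real.Gamma (α + β)))
    refine h1.congr ?_
    refine (ae_restrict_mem measurableSet_Ioi).mono fun v hv => ?_
    rw [mem_Ioi] at hv
    show ‖(v - l) ^ (α + β - 1) • r v‖ * (1 / Real.Gamma (α + β)) = ∫ u, ‖f u v‖ ∂μ
    rw [factF v hv, norm_smul, Real.norm_eq_abs,
      abs_of_nonneg (Real.rpow_nonneg (by linarith) _)]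
    ring
  have hv_ae : ∀ᵐ v ∂μ, Integrable (fun u => f u v) μ :=
    (ae_restrict_mem measurableSet_Ioi).mono fun v hv => factD v (mem_Ioi.mp hv)
  have hInt : Integrable (Function.uncurry f) (μ.prod μ) :=
    (integrable_prod_iff' hAESM).mpr ⟨hv_ae, factG⟩
  have step1 : (∫ u in Ioi l, ((u - l) ^ (β - 1) / Real.Gamma β) •
      ∫ v in Ioi u, ((v - u) ^ (α - 1) / Real.Gamma α) • r v) = ∫ u, (∫ v, f u v ∂μ) ∂μ := by
    refine setIntegral_congr_fun measurableSet_Ioi fun u hu => ?_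
    rw [mem_Ioi] at hu
    have e3 : ∫ v, f u v ∂μ = ∫ v in Ioi u, c u v • r v := by
      simp only [factA u hu]
      rw [hμ, setIntegral_indicator measurableSet_Ioi,
        inter_eq_self_of_subset_right (Ioi_subset_Ioi hu.le)]
    rw [e3, ← integral_smul]
    refine setIntegral_congr_fun measurableSet_Ioi fun v hv => ?_
    rw [smul_smul, hc]
  rw [step1, integral_integral_swap hInt]
  refine setIntegral_congr_fun measurableSet_Ioi fun v hv => ?_
  rw [mem_Ioi] at hv
  have e4 : ∀ u, f u v = (Ioo l v).indicator (fun u => c u v • r v) u := factB v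
  simp only [e4]
  rw [hμ, setIntegral_indicator measurableSet_Ioo,
    inter_eq_self_of_subset_right Ioo_subset_Ioi_self, integral_smul_const, factC v hv]
end

section
/- Let $X$ be a Banach space and $r:(a,\infty)\to\mathcal{L}(X)$ a pseudo-resolvent satisfying, for some $M>0$, $\omega\le a$, $\alpha>\kappa\ge 0$, the bound $\|(\lambda-\omega)^{\alpha+1} r(\lambda)/\lambda^{\kappa}\|\le M\,\Gamma(\alpha+1)$ for all $\lambda>a$. Then $\|\lambda r(\lambda)\|\to 0$ as $\lambda\to\infty$, and consequently $r(\lambda)=0$ for all $\lambda>a$. -/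
theorem stmt7 {X : Type*} [NormedAddCommGroup X] [NormedSpace ℝ X]
    (a M ω α κ : ℝ) (hM : 0 < M) (ha : 0 ≤ a) (hωa : ω ≤ a) (hκ : 0 ≤ κ) (hακ : κ < α)
    (r : ℝ → X →L[ℝ] X)
    (hres : ∀ l μ : ℝ, a < l → a < μ → r l - r μ = (μ - l) • (r l ∘L r μ))
    (hbound : ∀ l, a < l →
      ‖((l - ω) ^ (α + 1) / l ^ κ) • r l‖ ≤ M * Real.Gamma (α + 1)) :
    Filter.Tendsto (fun l : ℝ => ‖l • r l‖) Filter.atTop (nhds 0) ∧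
    ∀ l, a < l → r l = 0 := by
  have hΓ : 0 < Real.Gamma (α + 1) := Real.Gamma_pos_of_pos (by linarith)
  have nsmul : ∀ (c : ℝ) (T : X →L[ℝ] X), ‖c • T‖ = |c| * ‖T‖ := fun c T => by
    rw [← Real.norm_eq_abs]; exact norm_smul c T
  set G : ℝ := M * Real.Gamma (α + 1) with hG
  have hGpos : 0 < G := mul_pos hM hΓ
  set C : ℝ := G * 2 ^ (α + 1) with hCdef
  have h2pos : (0:ℝ) < 2 ^ (α + 1) := Real.rpow_pos_of_pos (by norm_num) _
  have hCpos : 0 < C := mul_pos hGpos h2pos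
  set L : ℝ := max (2 * |ω| + 1) (a + 1) with hL
  -- key pointwise bound
  have key : ∀ l : ℝ, L ≤ l → ‖l • r l‖ ≤ C * l ^ (κ - α) := by
    intro l hl
    have hl1 : 2 * |ω| + 1 ≤ l := le_trans (le_max_left _ _) hl
    have hl2 : a + 1 ≤ l := le_trans (le_max_right _ _) hl
    have hla : a < l := by linarith
    have hl0 : 0 < l := by linarith
    have hlω : 0 < l - ω := by
      have := abs_le.mp (le_refl |ω|) |>.2
      have : ω ≤ |ω| := le_abs_self ω
      linarith
    have hhalf : l / 2 ≤ l - ω := by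
      have : ω ≤ |ω| := le_abs_self ω
      linarith
    have hA : 0 < (l - ω) ^ (α + 1) := Real.rpow_pos_of_pos hlω _
    have hB : 0 < l ^ κ := Real.rpow_pos_of_pos hl0 _
    have hq : 0 < l ^ (α + 1) := Real.rpow_pos_of_pos hl0 _
    have hp : 0 < l ^ (κ - α) := Real.rpow_pos_of_pos hl0 _
    have hc : 0 < (l - ω) ^ (α + 1) / l ^ κ := div_pos hA hB
    have h1 : (l - ω) ^ (α + 1) / l ^ κ * ‖r l‖ ≤ G := by
      have := hbound l hla
      rwa [nsmul, abs_of_pos hc] at this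
    have h2 : (l - ω) ^ (α + 1) * ‖r l‖ ≤ G * l ^ κ := by
      rw [div_mul_eq_mul_div, div_le_iff₀ hB] at h1
      linarith
    -- rpow algebra
    have e1 : l ^ (κ + 1) = l ^ κ * l := Real.rpow_add_one (ne_of_gt hl0) κ
    have e2 : l ^ (κ + 1) = l ^ (κ - α) * l ^ (α + 1) := by
      rw [← Real.rpow_add hl0]; ring_nf
    have e3 : (l / 2) ^ (α + 1) ≤ (l - ω) ^ (α + 1) :=
      Real.rpow_le_rpow (by positivity) hhalf (by linarith)
    have e4 : (l / 2) ^ (α + 1) = l ^ (α + 1) / 2 ^ (α + 1) :=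
      Real.div_rpow hl0.le (by norm_num) _
    have e5 : l ^ (α + 1) ≤ 2 ^ (α + 1) * (l - ω) ^ (α + 1) := by
      rw [e4] at e3
      rw [div_le_iff₀ h2pos] at e3
      linarith [e3]
    have hnorm : ‖l • r l‖ = l * ‖r l‖ := by
      rw [nsmul, abs_of_pos hl0]
    rw [hnorm]
    have ht : 0 ≤ ‖r l‖ := norm_nonneg _
    -- multiply goal by A := (l-ω)^(α+1)
    rw [← mul_le_mul_iff_right₀ hA]
    have step1 : (l - ω) ^ (α + 1) * (l * ‖r l‖) ≤ G * (l ^ (κ - α) * l ^ (α + 1)) := by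
      calc (l - ω) ^ (α + 1) * (l * ‖r l‖)
          = ((l - ω) ^ (α + 1) * ‖r l‖) * l := by ring
        _ ≤ (G * l ^ κ) * l := by
            exact mul_le_mul_of_nonneg_right h2 hl0.le
        _ = G * (l ^ κ * l) := by ring
        _ = G * (l ^ (κ - α) * l ^ (α + 1)) := by rw [← e1, e2]
    calc (l - ω) ^ (α + 1) * (l * ‖r l‖)
        ≤ G * (l ^ (κ - α) * l ^ (α + 1)) := step1
      _ ≤ G * (l ^ (κ - α) * (2 ^ (α + 1) * (l - ω) ^ (α + 1))) := by
          apply mul_le_mul_of_nonneg_left _ hGpos.le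
          exact mul_le_mul_of_nonneg_left e5 hp.le
      _ = (l - ω) ^ (α + 1) * (C * l ^ (κ - α)) := by rw [hCdef]; ring
  -- the majorant tends to 0
  have hmaj : Filter.Tendsto (fun l : ℝ => C * l ^ (κ - α)) Filter.atTop (nhds 0) := by
    have h0 : Filter.Tendsto (fun l : ℝ => l ^ (κ - α)) Filter.atTop (nhds 0) := by
      have := tendsto_rpow_neg_atTop (y := α - κ) (by linarith)
      simpa [neg_sub] using this
    simpa using h0.const_mul C
  have hten : Filter.Tendsto (fun l : ℝ => ‖l • r l‖) Filter.atTop (nhds 0) := by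
    refine squeeze_zero' ?_ ?_ hmaj
    · exact Filter.Eventually.of_forall fun _ => norm_nonneg _
    · exact (Filter.eventually_ge_atTop L).mono key
  refine ⟨hten, ?_⟩
  -- r tends to 0
  have hr0 : Filter.Tendsto (fun μ => r μ) Filter.atTop (nhds (0 : X →L[ℝ] X)) := by
    rw [tendsto_zero_iff_norm_tendsto_zero]
    refine squeeze_zero' (Filter.Eventually.of_forall fun _ => norm_nonneg _) ?_ hten
    filter_upwards [Filter.eventually_ge_atTop (1:ℝ)] with μ hμ
    rw [nsmul, abs_of_pos (by linarith)]
    nlinarith [norm_nonneg (r μ)]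
  intro l hla
  have hprod : Filter.Tendsto (fun μ : ℝ => (μ - l) • (r l ∘L r μ)) Filter.atTop
      (nhds (0 : X →L[ℝ] X)) := by
    rw [tendsto_zero_iff_norm_tendsto_zero]
    have hmaj2 : Filter.Tendsto (fun μ : ℝ => ‖r l‖ * ‖μ • r μ‖) Filter.atTop (nhds 0) := by
      simpa using hten.const_mul ‖r l‖
    refine squeeze_zero' (Filter.Eventually.of_forall fun _ => norm_nonneg _) ?_ hmaj2
    filter_upwards [Filter.eventually_ge_atTop (max l 1)] with μ hμ
    have hμl : l ≤ μ := le_trans (le_max_left _ _) hμ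
    have hμ0 : (0:ℝ) < μ := lt_of_lt_of_le one_pos (le_trans (le_max_right _ _) hμ)
    calc ‖(μ - l) • (r l ∘L r μ)‖ = |μ - l| * ‖r l ∘L r μ‖ := by
          rw [nsmul]
      _ ≤ μ * (‖r l‖ * ‖r μ‖) := by
          apply mul_le_mul
          · rw [abs_of_nonneg (by linarith)]
            have : 0 ≤ l := le_of_lt (lt_of_le_of_lt ha hla)
            linarith
          · exact ContinuousLinearMap.opNorm_comp_le _ _
          · exact norm_nonneg _
          · linarith
      _ = ‖r l‖ * (μ * ‖r μ‖) := by ring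
      _ = ‖r l‖ * ‖μ • r μ‖ := by
          rw [nsmul, abs_of_pos hμ0]
  have hconst : Filter.Tendsto (fun _ : ℝ => r l) Filter.atTop (nhds (0 : X →L[ℝ] X)) := by
    have hsum := hr0.add hprod
    rw [add_zero] at hsum
    refine hsum.congr' ?_
    filter_upwards [Filter.eventually_gt_atTop a] with μ hμ
    have h := hres l μ hla hμ
    rw [← h]; abel
  exact tendsto_nhds_unique tendsto_const_nhds hconst
end

section
/- Let $X$ be a complex Banach space, $k\in\mathbb{N}$, and $S_k:\{\operatorname{Re} z>0\}\to\mathcal{L}(X)$ holomorphic satisfying $\|S_k(z+h)-S_k(z)\|\le M(|z|+|h|)^{\alpha}\,|h|^{k-\alpha-\beta}\, e^{\omega(|z|+|h|)}$ for all $z,z+h$ in the open right half-plane, where $M,\omega>0$, $\alpha,\beta\ge 0$ and $k>\alpha+\beta$. If $T(z)=S_k^{(k)}(z)$ denotes the $k$-th complex derivative, then $\|T(z)\|\le k!\,2^{\beta} 3^{\alpha} M\, \frac{|z|^{\alpha}}{(\operatorname{Re} z)^{\alpha+\beta}}\, e^{3\omega|z|/2}$ for every $z$ with $\operatorname{Re}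 z>0$. -/
open Complex Metric Real

set_option maxHeartbeats 1000000 in
theorem stmt12 {X : Type*} [NormedAddCommGroup X] [NormedSpace ℂ X] [CompleteSpace X]
    (k : ℕ) (M ω α β : ℝ) (hM : 0 < M) (hω : 0 < ω) (hα : 0 ≤ α) (hβ : 0 ≤ β)
    (hk : α + β < (k : ℝ))
    (S : ℂ → X →L[ℂ] X) (hS : DifferentiableOn ℂ S {z : ℂ | 0 < z.re})
    (hdiff : ∀ z h : ℂ, 0 < z.re → 0 < (z + h).re →
      ‖S (z + h) - S z‖ ≤
        M * (‖z‖ + ‖h‖) ^ α * ‖h‖ ^ ((k : ℝ) - α - β) *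
          Real.exp (ω * (‖z‖ + ‖h‖))) :
    ∀ z : ℂ, 0 < z.re →
      ‖iteratedDeriv k S z‖ ≤
        (k.factorial : ℝ) * 2 ^ β * 3 ^ α * M * (‖z‖ ^ α / z.re ^ (α + β)) *
          Real.exp (3 * ω * ‖z‖ / 2) := by
  intro z hz
  have hk1 : 1 ≤ k := by
    rcases Nat.eq_zero_or_pos k with h | h
    · exfalso; rw [h] at hk; push_cast at hk; linarith
    · exact h
  set r : ℝ := z.re / 2 with hrdef
  have hr : 0 < r := by positivity
  have hzabs : 0 < ‖z‖ := by
    rw [norm_pos_iff]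
    intro h; rw [h] at hz; simp at hz
  have hrez : z.re ≤ ‖z‖ := Complex.re_le_norm z
  -- the closed ball is inside the half-plane
  have hball : closedBall z r ⊆ {w : ℂ | 0 < w.re} := by
    intro w hw
    simp only [mem_closedBall, Complex.dist_eq] at hw
    have h1 : |(w - z).re| ≤ ‖w - z‖ := Complex.abs_re_le_norm _
    have h2 : (w - z).re = w.re - z.re := by simp
    rw [h2] at h1
    have h3 := abs_le.mp (h1.trans hw)
    simp only [Set.mem_setOf_eq]
    simp only [hrdef] at h3 ⊢
    linarith [h3.1]
  set R : NNReal := ⟨r, hr.le⟩ with hRdef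
  have hRr : (R : ℝ) = r := rfl
  have hRpos : (0 : NNReal) < R := by
    rw [← NNReal.coe_lt_coe, hRr]; exact hr
  have hSball : DifferentiableOn ℂ S (closedBall z R) := hS.mono (by rw [hRr]; exact hball)
  set g : ℂ → X →L[ℂ] X := fun ζ => S ζ - S z with hgdef
  have hgball : DifferentiableOn ℂ g (closedBall z R) := hSball.sub_const _
  have hq : HasFPowerSeriesOnBall S (cauchyPowerSeries S z R) z R :=
    hSball.hasFPowerSeriesOnBall hRpos
  have hne : ∀ ζ ∈ sphere z r, ζ - z ≠ 0 := by
    intro ζ hζ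
    rw [mem_sphere, Complex.dist_eq] at hζ
    intro h
    rw [h] at hζ; simp at hζ; linarith [hζ]
  have hScont : ContinuousOn S (sphere z r) :=
    hS.continuousOn.mono ((sphere_subset_closedBall).trans hball)
  have hcont_pow : ContinuousOn (fun ζ : ℂ => (ζ - z)⁻¹ ^ k) (sphere z r) :=
    ((continuousOn_id.sub continuousOn_const).inv₀ hne).pow k
  have hcont_inv : ContinuousOn (fun ζ : ℂ => (ζ - z)⁻¹) (sphere z r) :=
    (continuousOn_id.sub continuousOn_const).inv₀ hne
  -- circle integrability of the three integrands
  have hintS : CircleIntegrable (fun ζ : ℂ => (ζ - z)⁻¹ ^ k • (ζ - z)⁻¹ • S ζ) z r :=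
    ContinuousOn.circleIntegrable hr.le (hcont_pow.smul (hcont_inv.smul hScont))
  have hintg : CircleIntegrable (fun ζ : ℂ => (ζ - z)⁻¹ ^ k • (ζ - z)⁻¹ • g ζ) z r :=
    ContinuousOn.circleIntegrable hr.le
      (hcont_pow.smul (hcont_inv.smul (hScont.sub continuousOn_const)))
  -- the two power-series coefficients agree at 1
  have key : (cauchyPowerSeries S z R k fun _ => (1 : ℂ)) =
      cauchyPowerSeries g z R k fun _ => (1 : ℂ) := by
    simp only [cauchyPowerSeries, ContinuousMultilinearMap.mkPiRing_apply, Finset.prod_const,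
      one_pow, one_smul]
    congr 1
    have hsub : (∮ ζ in C(z, (R : ℝ)), (ζ - z)⁻¹ ^ k • (ζ - z)⁻¹ • S ζ) -
        (∮ ζ in C(z, (R : ℝ)), (ζ - z)⁻¹ ^ k • (ζ - z)⁻¹ • g ζ) =
        ∮ ζ in C(z, (R : ℝ)), ((ζ - z)⁻¹ ^ k * (ζ - z)⁻¹) • S z := by
      rw [hRr, ← circleIntegral.integral_sub hintS hintg]
      apply circleIntegral.integral_congr hr.le
      intro ζ _
      simp only [hgdef, smul_sub, mul_smul]
      abel
    have hzero : (∮ ζ in C(z, (R : ℝ)), ((ζ - z)⁻¹ ^ k * (ζ - z)⁻¹) • S z) = 0 := by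
      rw [circleIntegral.integral_smul_const]
      have hident : ∀ ζ : ℂ, (ζ - z)⁻¹ ^ k * (ζ - z)⁻¹ = (ζ - z) ^ (-(k + 1) : ℤ) := by
        intro ζ
        rw [zpow_neg, inv_pow, ← mul_inv, ← pow_succ]
        norm_cast
      rw [circleIntegral.integral_congr (by rw [hRr]; exact hr.le)
        (fun ζ _ => hident ζ)]
      rw [circleIntegral.integral_sub_zpow_of_ne (by omega : (-(k + 1) : ℤ) ≠ -1)]
      simp
    have := sub_eq_zero.mp (by rw [hsub, hzero])
    exact this
  -- iterated derivative via power series coefficient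
  have h1 : iteratedDeriv k S z = k.factorial • (cauchyPowerSeries g z R k fun _ => (1 : ℂ)) := by
    rw [iteratedDeriv_eq_iteratedFDeriv, ← hq.factorial_smul 1 k, key]
  -- the pointwise bound on the circle
  set A : ℝ := ‖z‖ with hAdef
  set C : ℝ := M * (A + r) ^ α * r ^ ((k : ℝ) - α - β) * Real.exp (ω * (A + r)) with hCdef
  have hCpos : 0 < C := by
    apply mul_pos
    apply mul_pos
    apply mul_pos hM
    · exact Real.rpow_pos_of_pos (by linarith) _
    · exact Real.rpow_pos_of_pos hr _
    · exact Real.exp_pos _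
  have hCbound : ∀ θ : ℝ, ‖g (circleMap z r θ)‖ ≤ C := by
    intro θ
    have hcm : circleMap z r θ = z + circleMap 0 r θ := by
      rw [← circleMap_sub_center]; ring
    have habs : ‖circleMap 0 r θ‖ = r := by
      rw [norm_circleMap_zero, abs_of_pos hr]
    have hmem : circleMap z r θ ∈ closedBall z r :=
      sphere_subset_closedBall (circleMap_mem_sphere z hr.le θ)
    have hre : 0 < (z + circleMap 0 r θ).re := by
      rw [← hcm]; exact hball hmem
    have := hdiff z (circleMap 0 r θ) hz hre
    rw [habs] at this
    simp only [hgdef, hCdef, hAdef]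
    rw [hcm]
    exact this
  -- integral bound
  have hintnorm : IntervalIntegrable (fun θ : ℝ => ‖g (circleMap z r θ)‖)
      MeasureTheory.volume 0 (2 * π) := by
    apply Continuous.intervalIntegrable
    apply Continuous.norm
    apply ContinuousOn.comp_continuous (s := {w : ℂ | 0 < w.re})
      ((hS.sub (differentiableOn_const _)).continuousOn) (continuous_circleMap z r)
    intro θ
    exact hball (sphere_subset_closedBall (circleMap_mem_sphere z hr.le θ))
  have hintle : (∫ θ : ℝ in (0)..(2 * π), ‖g (circleMap z r θ)‖) ≤ 2 * π * C := by
    calc (∫ θ : ℝ in (0)..(2 * π), ‖g (circleMap z r θ)‖)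
        ≤ ∫ _ : ℝ in (0)..(2 * π), C :=
          intervalIntegral.integral_mono_on Real.two_pi_pos.le hintnorm
            intervalIntegrable_const (fun θ _ => hCbound θ)
      _ = 2 * π * C := by rw [intervalIntegral.integral_const, smul_eq_mul]; ring
  -- norm of the coefficient
  have hcoeff : ‖cauchyPowerSeries g z R k fun _ => (1 : ℂ)‖ ≤ C * (r⁻¹) ^ k := by
    have h2 : ‖cauchyPowerSeries g z R k fun _ => (1 : ℂ)‖ ≤ ‖cauchyPowerSeries g z R k‖ := by
      have := (cauchyPowerSeries g z R k).le_opNorm (fun _ => (1 : ℂ))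
      simpa using this
    refine h2.trans ?_
    have h3 := norm_cauchyPowerSeries_le g z (R : ℝ) k
    rw [hRr] at h3 ⊢
    refine h3.trans ?_
    rw [abs_of_pos hr]
    apply mul_le_mul_of_nonneg_right _ (by positivity)
    calc (2 * π)⁻¹ * ∫ θ : ℝ in (0)..(2 * π), ‖g (circleMap z r θ)‖
        ≤ (2 * π)⁻¹ * (2 * π * C) := by
          apply mul_le_mul_of_nonneg_left hintle (by positivity)
      _ = C := by field_simp
  -- put it together
  have hnorm : ‖iteratedDeriv k S z‖ ≤ (k.factorial : ℝ) * (C * (r⁻¹) ^ k) := by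
    rw [h1, ← Nat.cast_smul_eq_nsmul ℝ, norm_smul, Real.norm_natCast]
    exact mul_le_mul_of_nonneg_left hcoeff (by positivity)
  -- final arithmetic
  have hfact : (0 : ℝ) ≤ (k.factorial : ℝ) := Nat.cast_nonneg _
  have hrinv : (r⁻¹ : ℝ) ^ k = r ^ (-(k : ℝ)) := by
    rw [Real.rpow_neg hr.le, Real.rpow_natCast, inv_pow]
  have hrpow : r ^ ((k : ℝ) - α - β) * r ^ (-(k : ℝ)) = r ^ (-(α + β)) := by
    rw [← Real.rpow_add hr]
    ring_nf
  have hrab : r ^ (-(α + β)) = 2 ^ (α + β) / z.re ^ (α + β) := by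
    rw [Real.rpow_neg hr.le, hrdef, Real.div_rpow hz.le (by norm_num : (0:ℝ) ≤ 2)]
    rw [inv_div]
  have hLHS : C * (r⁻¹) ^ k =
      M * (A + r) ^ α * Real.exp (ω * (A + r)) * (2 ^ (α + β) / z.re ^ (α + β)) := by
    rw [hrinv, hCdef]
    calc M * (A + r) ^ α * r ^ ((k : ℝ) - α - β) * Real.exp (ω * (A + r)) * r ^ (-(k : ℝ))
        = M * (A + r) ^ α * Real.exp (ω * (A + r)) *
          (r ^ ((k : ℝ) - α - β) * r ^ (-(k : ℝ))) := by ring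
      _ = M * (A + r) ^ α * Real.exp (ω * (A + r)) * (2 ^ (α + β) / z.re ^ (α + β)) := by
          rw [hrpow, hrab]
  have hRHS : (2 : ℝ) ^ β * 3 ^ α * M * (A ^ α / z.re ^ (α + β)) *
      Real.exp (3 * ω * A / 2) =
      M * ((3 / 2) ^ α * A ^ α) * Real.exp (3 * ω * A / 2) *
        (2 ^ (α + β) / z.re ^ (α + β)) := by
    have h32 : ((3 : ℝ) / 2) ^ α * 2 ^ (α + β) = 3 ^ α * 2 ^ β := by
      rw [Real.div_rpow (by norm_num) (by norm_num), Real.rpow_add (by norm_num)]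
      field_simp
    rw [show M * ((3 / 2) ^ α * A ^ α) * Real.exp (3 * ω * A / 2) *
        (2 ^ (α + β) / z.re ^ (α + β)) =
        M * A ^ α * Real.exp (3 * ω * A / 2) *
        (((3 : ℝ) / 2) ^ α * 2 ^ (α + β)) / z.re ^ (α + β) from by ring, h32]
    ring
  have hAr : A + r ≤ 3 / 2 * A := by
    simp only [hrdef, hAdef]; linarith
  have h1' : (A + r) ^ α ≤ (3 / 2) ^ α * A ^ α := by
    rw [← Real.mul_rpow (by norm_num) hzabs.le]
    exact Real.rpow_le_rpow (by linarith) hAr hα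
  have h2' : Real.exp (ω * (A + r)) ≤ Real.exp (3 * ω * A / 2) := by
    apply Real.exp_le_exp.mpr
    nlinarith
  have hstep : C * (r⁻¹) ^ k ≤
      2 ^ β * 3 ^ α * M * (A ^ α / z.re ^ (α + β)) * Real.exp (3 * ω * A / 2) := by
    rw [hLHS, hRHS]
    apply mul_le_mul_of_nonneg_right _
      (div_nonneg (Real.rpow_nonneg (by norm_num) _) (Real.rpow_nonneg hz.le _))
    calc M * (A + r) ^ α * Real.exp (ω * (A + r))
        ≤ M * ((3 / 2) ^ α * A ^ α) * Real.exp (ω * (A + r)) := by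
          apply mul_le_mul_of_nonneg_right _ (Real.exp_pos _).le
          exact mul_le_mul_of_nonneg_left h1' hM.le
      _ ≤ M * ((3 / 2) ^ α * A ^ α) * Real.exp (3 * ω * A / 2) := by
          apply mul_le_mul_of_nonneg_left h2' (mul_nonneg hM.le (mul_nonneg (Real.rpow_nonneg (by norm_num) _) (Real.rpow_nonneg (norm_nonneg _) _)))
  calc ‖iteratedDeriv k S z‖ ≤ (k.factorial : ℝ) * (C * (r⁻¹) ^ k) := hnorm
    _ ≤ (k.factorial : ℝ) *
        (2 ^ β * 3 ^ α * M * (A ^ α / z.re ^ (α + β)) * Real.exp (3 * ω * A / 2)) :=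
          mul_le_mul_of_nonneg_left hstep hfact
    _ = (k.factorial : ℝ) * 2 ^ β * 3 ^ α * M * (A ^ α / z.re ^ (α + β)) *
        Real.exp (3 * ω * A / 2) := by ring
end
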